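/- Let f : [0,T] × ℝⁿ → ℝⁿ be continuous and let x ∈ C([0,T],ℝⁿ). Define V(φ)(t) := ∫₀ᵗ φ(s) ds and the average φ̄ := (1/T)∫₀ᵀ φ(t) dt. If x satisfies x = x̄ + T·(N(x))̄ + V(N(x) − (N(x))̄) − (V(N(x) − (N(x))̄))̄ where N(x)(t) := f(t,x(t)), then x is C¹, x'(t) = f(t,x(t)) for all t ∈ [0,T], and x(0) = x(T). -/

import Mathlib

open Set intervalIntegral MeasureTheory

/-- FTC: derivative of primitive within `Icc 0 T` for continuous-on integrand. -/
lemma primitive_hasDerivWithinAt {E : Type*} [NormedAddCommGroup E] [NormedSpace ℝ E]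
    [CompleteSpace E]
    {g : ℝ → E} {T : ℝ} (hT : 0 < T) (hg : ContinuousOn g (Set.Icc 0 T))
    {t : ℝ} (ht : t ∈ Set.Icc 0 T) :
    HasDerivWithinAt (fun u => ∫ s in (0:ℝ)..u, g s) (g t) (Set.Icc 0 T) t := by
  have hgi : IntervalIntegrable g volume 0 t := by
    apply ContinuousOn.intervalIntegrable
    apply hg.mono
    rw [Set.uIcc_of_le ht.1]
    exact Set.Icc_subset_Icc le_rfl ht.2
  have hright : t < T → HasDerivWithinAt (fun u => ∫ s in (0:ℝ)..u, g s) (g t) (Set.Ici t) t := by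
    intro htT
    have hcw : ContinuousWithinAt g (Set.Ici t) t := by
      have h1 : ContinuousWithinAt g (Set.Icc t T) t :=
        (hg t ht).mono (Set.Icc_subset_Icc ht.1 le_rfl)
      rwa [ContinuousWithinAt, nhdsWithin_Icc_eq_nhdsGE htT] at h1
    have hmeas : StronglyMeasurableAtFilter g (nhdsWithin t (Set.Ioi t)) volume := by
      refine ⟨Set.Icc t T, ?_, ((hg.mono (Set.Icc_subset_Icc ht.1 le_rfl)).aestronglyMeasurable
        measurableSet_Icc)⟩
      have : Set.Icc t T ∈ nhdsWithin t (Set.Ici t) := by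
        rw [← nhdsWithin_Icc_eq_nhdsGE htT]
        exact self_mem_nhdsWithin
      exact nhdsWithin_mono t Set.Ioi_subset_Ici_self this
    exact integral_hasDerivWithinAt_right hgi hmeas (hcw.mono Set.Ioi_subset_Ici_self)
  have hleft : 0 < t → HasDerivWithinAt (fun u => ∫ s in (0:ℝ)..u, g s) (g t) (Set.Iic t) t := by
    intro h0t
    have hcw : ContinuousWithinAt g (Set.Iic t) t := by
      have h1 : ContinuousWithinAt g (Set.Icc 0 t) t :=
        (hg t ht).mono (Set.Icc_subset_Icc le_rfl ht.2)
      rwa [ContinuousWithinAt, nhdsWithin_Icc_eq_nhdsLE h0t] at h1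
    have hmeas : StronglyMeasurableAtFilter g (nhdsWithin t (Set.Iic t)) volume := by
      refine ⟨Set.Icc 0 t, ?_, ((hg.mono (Set.Icc_subset_Icc le_rfl ht.2)).aestronglyMeasurable
        measurableSet_Icc)⟩
      rw [← nhdsWithin_Icc_eq_nhdsLE h0t]
      exact self_mem_nhdsWithin
    exact integral_hasDerivWithinAt_right hgi hmeas hcw
  rcases eq_or_lt_of_le ht.1 with h0 | h0
  · -- t = 0
    have := hright (h0 ▸ hT)
    exact this.mono (h0 ▸ Set.Icc_subset_Ici_self)
  · rcases eq_or_lt_of_le ht.2 with hTt | hTt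
    · -- t = T
      exact (hleft (hTt ▸ h0)).mono (hTt ▸ Set.Icc_subset_Iic_self)
    · -- interior
      have := (hleft h0).union (hright hTt)
      have huniv : Set.Iic t ∪ Set.Ici t = Set.univ := Set.Iic_union_Ici
      rw [huniv] at this
      exact this.mono (Set.subset_univ _)

/-- A fixed point of the operator
`K₃(x) = x̄ + T·N(x)̄ + V(N(x) − N(x)̄) − (V(N(x) − N(x)̄))̄`
is a C¹ solution of `x' = f(t,x)` on `[0,T]` with `x(0) = x(T)`. -/
theorem stmt_18 {n : ℕ}
    (f : ℝ → EuclideanSpace ℝ (Fin n) → EuclideanSpace ℝ (Fin n))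
    (hf : Continuous fun p : ℝ × EuclideanSpace ℝ (Fin n) => f p.1 p.2)
    (T : ℝ) (hT : 0 < T)
    (x : ℝ → EuclideanSpace ℝ (Fin n)) (hx : ContinuousOn x (Set.Icc 0 T))
    (h : ∀ t ∈ Set.Icc (0:ℝ) T,
      x t = (T⁻¹ • ∫ s in (0:ℝ)..T, x s)
          + T • (T⁻¹ • ∫ s in (0:ℝ)..T, f s (x s))
          + (∫ s in (0:ℝ)..t,
              (f s (x s) - T⁻¹ • ∫ r in (0:ℝ)..T, f r (x r)))
          - T⁻¹ • ∫ u in (0:ℝ)..T, (∫ s in (0:ℝ)..u,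
              (f s (x s) - T⁻¹ • ∫ r in (0:ℝ)..T, f r (x r)))) :
    (∀ t ∈ Set.Icc (0:ℝ) T,
      HasDerivWithinAt x (f t (x t)) (Set.Icc 0 T) t) ∧ x 0 = x T := by
  set g : ℝ → EuclideanSpace ℝ (Fin n) := fun s => f s (x s) with hgdef
  have hg : ContinuousOn g (Set.Icc 0 T) :=
    hf.comp_continuousOn (continuousOn_id.prodMk hx)
  set m : EuclideanSpace ℝ (Fin n) := T⁻¹ • ∫ r in (0:ℝ)..T, g r with hmdef
  set A : EuclideanSpace ℝ (Fin n) := T⁻¹ • ∫ s in (0:ℝ)..T, x s with hA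
  set G : ℝ → EuclideanSpace ℝ (Fin n) := fun u => ∫ s in (0:ℝ)..u, (g s - m) with hGdef
  set D : EuclideanSpace ℝ (Fin n) := T⁻¹ • ∫ u in (0:ℝ)..T, G u with hD
  have hTne : T ≠ 0 := hT.ne'
  have hgi : IntervalIntegrable g volume 0 T := by
    apply ContinuousOn.intervalIntegrable
    rwa [Set.uIcc_of_le hT.le]
  have hgm : ContinuousOn (fun s => g s - m) (Set.Icc 0 T) := hg.sub continuousOn_const
  have hGcont : ContinuousOn G (Set.Icc 0 T) := by
    have := intervalIntegral.continuousOn_primitive_interval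
      (f := fun s => g s - m) (μ := volume) (a := (0:ℝ)) (b := T)
      (by rw [Set.uIcc_of_le hT.le]; exact hgm.integrableOn_Icc)
    rwa [Set.uIcc_of_le hT.le] at this
  have hGi : IntervalIntegrable G volume 0 T := by
    apply ContinuousOn.intervalIntegrable
    rwa [Set.uIcc_of_le hT.le]
  have hGt : ∀ t : ℝ, G t = ∫ s in (0:ℝ)..t, (f s (x s) - T⁻¹ • ∫ r in (0:ℝ)..T, f r (x r)) :=
    fun t => rfl
  -- rearranged fixed point equation
  have hx1 : ∀ t ∈ Set.Icc (0:ℝ) T, x t = (A + T • m - D) + G t := by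
    intro t ht
    rw [h t ht, ← hGt t]
    abel
  -- integrate over [0,T] to get m = 0
  have hm0 : m = 0 := by
    have hInt : (∫ t in (0:ℝ)..T, x t)
        = ∫ t in (0:ℝ)..T, ((A + T • m - D) + G t) := by
      apply intervalIntegral.integral_congr
      intro t ht
      rw [Set.uIcc_of_le hT.le] at ht
      exact hx1 t ht
    have hrhs : (∫ t in (0:ℝ)..T, ((A + T • m - D) + G t))
        = (T - 0) • (A + T • m - D) + (∫ t in (0:ℝ)..T, G t) := by
      rw [intervalIntegral.integral_add (_root_.intervalIntegrable_const) hGi,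
        intervalIntegral.integral_const]
    have hTD : T • D = ∫ u in (0:ℝ)..T, G u := by
      rw [hD, smul_smul, mul_inv_cancel₀ hTne, one_smul]
    have hTA : T • A = ∫ s in (0:ℝ)..T, x s := by
      rw [hA, smul_smul, mul_inv_cancel₀ hTne, one_smul]
    rw [hrhs, sub_zero, smul_sub, smul_add, hTD, hTA] at hInt
    rw [sub_add_cancel] at hInt
    have h3 : T • T • m = 0 := left_eq_add.mp hInt
    rcases smul_eq_zero.mp h3 with h4 | h4
    · exact absurd h4 hTne
    rcases smul_eq_zero.mp h4 with h5 | h5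
    · exact absurd h5 hTne
    exact h5
  have hTm : T • m = (0 : EuclideanSpace ℝ (Fin n)) := by rw [hm0, smul_zero]
  have hx2 : ∀ t ∈ Set.Icc (0:ℝ) T, x t = (A - D) + G t := by
    intro t ht
    rw [hx1 t ht, hTm, add_zero]
  constructor
  · intro t ht
    have hG' : HasDerivWithinAt G (g t - m) (Set.Icc 0 T) t :=
      primitive_hasDerivWithinAt hT hgm ht
    rw [hm0, sub_zero] at hG'
    have hder : HasDerivWithinAt (fun u => (A - D) + G u) (0 + g t) (Set.Icc 0 T) t :=
      (hasDerivWithinAt_const t _ (A - D)).add hG'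
    rw [zero_add] at hder
    exact hder.congr (fun y hy => hx2 y hy) (hx2 t ht)
  · have hintg : (∫ r in (0:ℝ)..T, g r) = 0 := by
      rwa [hmdef, smul_smul, mul_inv_cancel₀ hTne, one_smul] at hTm
    have hG0 : G 0 = 0 := intervalIntegral.integral_same
    have hGT : G T = 0 := by
      show (∫ s in (0:ℝ)..T, (g s - m)) = 0
      rw [intervalIntegral.integral_sub hgi (_root_.intervalIntegrable_const),
        intervalIntegral.integral_const, hintg, hm0, smul_zero, sub_zero]
    rw [hx2 0 ⟨le_rfl, hT.le⟩, hx2 T ⟨hT.le, le_rfl⟩, hG0, hGT]
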